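/- The differential of the similarity map S : W → W at W ∈ W, applied to a tangent matrix V ∈ T_W, is given componentwise by dS_i(W)[V] = Σ_{k∈N_i} ω_{ik} R_{S_i(W)}[ V_k / W_k ] for every i ∈ V, where the quotient V_k / W_k is taken componentwise; equivalently, in global matrix form, dS(W)[V] = R_{S(W)}[ A_Ω (V / W) ]. -/

import Mathlib

/-- The replicator operator `R_p a = Diag(p) a − p ⟨p, a⟩`. -/
def replicator {n : ℕ} (p a : Fin n → ℝ) : Fin n → ℝ :=
  fun j => p j * a j - p j * ∑ k, p k * a k

/-- The lifting map `exp_p(z) = p e^z / ⟨p, e^z⟩`. -/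
noncomputable def softExp {n : ℕ} (p z : Fin n → ℝ) : Fin n → ℝ :=
  fun j => p j * Real.exp (z j) / ∑ k, p k * Real.exp (z k)

/-- The orthogonal projection `Π_n v = v − (⟨1, v⟩ / n) 1` onto the tangent space `T_n`. -/
noncomputable def projT {n : ℕ} (v : Fin n → ℝ) : Fin n → ℝ :=
  fun j => v j - (∑ k, v k) / n

/-- The inverse lifting map `exp_p^{-1}(q) = Π_n log(q / p)`. -/
noncomputable def softExpInv {n : ℕ} (p q : Fin n → ℝ) : Fin n → ℝ :=
  projT fun j => Real.log (q j / p j)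

/-- The similarity map `S : W → W`,
`S_i(W) = exp_{1_{S_n}}( Σ_{k ∈ N_i} ω_{ik}( exp_{1_{S_n}}^{-1}(W_k) − (1/ρ) D_k ) )`. -/
noncomputable def simMap {m n : ℕ} (nbh : Fin m → Finset (Fin m)) (ω : Fin m → Fin m → ℝ)
    (D : Fin m → Fin n → ℝ) (ρ : ℝ) (W : Fin m → Fin n → ℝ) : Fin m → Fin n → ℝ :=
  fun i => softExp (fun _ => 1 / n)
    (∑ k ∈ nbh i, ω i k • (softExpInv (fun _ => 1 / n) (W k) - (1 / ρ) • D k))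

/-- Linearity of the replicator in its second argument. -/
lemma replicator_sum {n : ℕ} {ι : Type*} (q : Fin n → ℝ) (s : Finset ι) (c : ι → ℝ)
    (b : ι → Fin n → ℝ) :
    replicator q (fun l => ∑ k ∈ s, c k * b k l) = ∑ k ∈ s, c k • replicator q (b k) := by
  funext j
  have h1 : ∑ t, q t * ∑ k ∈ s, c k * b k t = ∑ k ∈ s, c k * ∑ t, q t * b k t := by
    calc ∑ t, q t * ∑ k ∈ s, c k * b k t
        = ∑ t, ∑ k ∈ s, c k * (q t * b k t) := by
          refine Finset.sum_congr rfl fun t _ => ?_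
          rw [Finset.mul_sum]; exact Finset.sum_congr rfl fun k _ => by ring
      _ = ∑ k ∈ s, ∑ t, c k * (q t * b k t) := Finset.sum_comm
      _ = ∑ k ∈ s, c k * ∑ t, q t * b k t := by
          refine Finset.sum_congr rfl fun k _ => ?_; rw [Finset.mul_sum]
  simp only [replicator, Finset.sum_apply, Pi.smul_apply, smul_eq_mul, h1]
  rw [Finset.mul_sum, Finset.mul_sum, ← Finset.sum_sub_distrib]
  exact Finset.sum_congr rfl fun k _ => by ring


lemma sim_core {m n : ℕ} (hn : 0 < n) (nbh : Fin m → Finset (Fin m)) (ω : Fin m → Fin m → ℝ)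
    (D : Fin m → Fin n → ℝ) (ρ : ℝ) (W : Fin m → Fin n → ℝ)
    (hW : ∀ i j, 0 < W i j) (i : Fin m) (j : Fin n) :
    ∃ L : (Fin m → Fin n → ℝ) →L[ℝ] ℝ,
      HasFDerivAt (fun W' => simMap nbh ω D ρ W' i j) L W ∧
      ∀ V : Fin m → Fin n → ℝ,
        L V = replicator (simMap nbh ω D ρ W i)
            (fun l => ∑ k ∈ nbh i, ω i k * (V k l / W k l)) j := by
  classical
  have hn' : (0:ℝ) < n := by exact_mod_cast hn
  set p : Fin n → ℝ := fun _ => 1 / (n:ℝ) with hp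
  have hp0 : ∀ t : Fin n, 0 < p t := fun t => by
    simp only [hp]; positivity
  -- evaluation CLM
  set ev : Fin m → Fin n → (Fin m → Fin n → ℝ) →L[ℝ] ℝ :=
    fun k t => (ContinuousLinearMap.proj (R := ℝ) (φ := fun _ : Fin n => ℝ) t).comp
      (ContinuousLinearMap.proj (R := ℝ) (φ := fun _ : Fin m => Fin n → ℝ) k) with hev_def
  have hev : ∀ k t, HasFDerivAt (fun W' : Fin m → Fin n → ℝ => W' k t) (ev k t) W :=
    fun k t => (ev k t).hasFDerivAt
  have hev_apply : ∀ k t (V : Fin m → Fin n → ℝ), ev k t V = V k t := fun _ _ _ => rfl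
  -- the zeta functions
  set ζ : Fin n → (Fin m → Fin n → ℝ) → ℝ := fun l W' =>
    ∑ k ∈ nbh i, ω i k *
      ((Real.log (W' k l / p l) - (∑ t, Real.log (W' k t / p t)) / (n:ℝ)) - 1 / ρ * D k l)
    with hζ_def
  have hζeq : ∀ (W' : Fin m → Fin n → ℝ) (l : Fin n),
      (∑ k ∈ nbh i, ω i k • (softExpInv p (W' k) - (1 / ρ) • D k)) l = ζ l W' := by
    intro W' l
    simp only [hζ_def, softExpInv, projT, Finset.sum_apply, Pi.smul_apply, Pi.sub_apply,
      smul_eq_mul]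
  have hrepr : ∀ (W' : Fin m → Fin n → ℝ) (l : Fin n),
      simMap nbh ω D ρ W' i l = p l * Real.exp (ζ l W') / ∑ l', p l' * Real.exp (ζ l' W') := by
    intro W' l
    simp only [simMap, softExp]
    rw [hζeq W' l]
    congr 1
    exact Finset.sum_congr rfl fun l' _ => by rw [hζeq W' l']
  -- derivative of the log terms
  have hlog : ∀ k t, HasFDerivAt (fun W' : Fin m → Fin n → ℝ => Real.log (W' k t / p t))
      ((W k t / p t)⁻¹ • ((p t)⁻¹ • ev k t)) W := by
    intro k t
    have h1 : HasFDerivAt (fun W' : Fin m → Fin n → ℝ => W' k t / p t)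
        ((p t)⁻¹ • ev k t) W := by
      simpa [div_eq_inv_mul] using (hev k t).const_mul (p t)⁻¹
    exact h1.log (ne_of_gt (div_pos (hW k t) (hp0 t)))
  -- derivative of zeta
  set B : Fin m → Fin n → (Fin m → Fin n → ℝ) →L[ℝ] ℝ :=
    fun k t => (W k t / p t)⁻¹ • ((p t)⁻¹ • ev k t) with hB_def
  have hB_apply : ∀ k t (V : Fin m → Fin n → ℝ), B k t V = V k t / W k t := by
    intro k t V
    simp only [hB_def, ContinuousLinearMap.smul_apply, hev_apply, smul_eq_mul]
    rw [inv_div]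
    field_simp
    exact mul_div_mul_left _ _ (hp0 t).ne'
  set A : Fin n → (Fin m → Fin n → ℝ) →L[ℝ] ℝ := fun l =>
    ∑ k ∈ nbh i, ω i k • (B k l - (n:ℝ)⁻¹ • ∑ t, B k t) with hA_def
  have hζ' : ∀ l, HasFDerivAt (ζ l) (A l) W := by
    intro l
    refine HasFDerivAt.fun_sum fun k _ => ?_
    have hsum : HasFDerivAt (fun W' : Fin m → Fin n → ℝ =>
        (∑ t, Real.log (W' k t / p t)) / (n:ℝ)) ((n:ℝ)⁻¹ • ∑ t, B k t) W := by
      have h0 := (HasFDerivAt.fun_sum (u := Finset.univ) fun t _ => hlog k t).const_mul (n:ℝ)⁻¹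
      have hfe : (fun W' : Fin m → Fin n → ℝ => (∑ t, Real.log (W' k t / p t)) / (n:ℝ))
          = fun W' => (n:ℝ)⁻¹ * ∑ t, Real.log (W' k t / p t) :=
        funext fun W' => div_eq_inv_mul _ _
      rw [hfe]
      exact h0
    exact (((hlog k l).sub hsum).sub_const _).const_mul _
  have hA_apply : ∀ l (V : Fin m → Fin n → ℝ),
      A l V = ∑ k ∈ nbh i, ω i k * (V k l / W k l - (n:ℝ)⁻¹ * ∑ t, V k t / W k t) := by
    intro l V
    simp only [hA_def, ContinuousLinearMap.sum_apply, ContinuousLinearMap.smul_apply,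
      ContinuousLinearMap.sub_apply, smul_eq_mul, hB_apply]
  -- numerator and denominator
  set numW : Fin n → ℝ := fun l => p l * Real.exp (ζ l W) with hnumW
  set den : ℝ := ∑ l, numW l with hden_def
  have hnum0 : ∀ l, 0 < numW l := fun l => mul_pos (hp0 l) (Real.exp_pos _)
  have hden0 : 0 < den := Finset.sum_pos (fun l _ => hnum0 l) ⟨⟨0, hn⟩, Finset.mem_univ _⟩
  have hnum : ∀ l, HasFDerivAt (fun W' => p l * Real.exp (ζ l W')) (numW l • A l) W := by
    intro l
    simpa [hnumW, smul_smul] using ((hζ' l).exp).const_mul (p l)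
  have hden : HasFDerivAt (fun W' => ∑ l, p l * Real.exp (ζ l W')) (∑ l, numW l • A l) W :=
    HasFDerivAt.fun_sum fun l _ => hnum l
  have hinv : HasFDerivAt (fun W' => (∑ l, p l * Real.exp (ζ l W'))⁻¹)
      ((-(den ^ 2)⁻¹) • ∑ l, numW l • A l) W := by
    exact (hasDerivAt_inv (x := den) hden0.ne').comp_hasFDerivAt W hden
  have hmul := (hnum j).mul hinv
  refine ⟨numW j • ((-(den ^ 2)⁻¹) • ∑ l, numW l • A l) + den⁻¹ • (numW j • A j), ?_, ?_⟩
  · have hfun : (fun W' => simMap nbh ω D ρ W' i j)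
        = fun W' => (p j * Real.exp (ζ j W')) * (∑ l, p l * Real.exp (ζ l W'))⁻¹ := by
      funext W'
      rw [hrepr W' j, div_eq_mul_inv]
    rw [hfun]
    exact hmul
  · intro V
    have hq : ∀ l, simMap nbh ω D ρ W i l = numW l / den := fun l => hrepr W l
    have hqsum : ∑ l, simMap nbh ω D ρ W i l = 1 := by
      simp only [hq]
      rw [← Finset.sum_div]
      exact div_self hden0.ne'
    -- value of the derivative
    have hfold : ∀ l, p l * Real.exp (ζ l W) = numW l := fun _ => rfl
    have hdenfold : (∑ l, p l * Real.exp (ζ l W)) = den := rfl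
    simp only [ContinuousLinearMap.add_apply, ContinuousLinearMap.smul_apply,
      ContinuousLinearMap.sum_apply, smul_eq_mul, hfold, hdenfold]
    set b : Fin n → ℝ := fun l => ∑ k ∈ nbh i, ω i k * (V k l / W k l) with hb
    set C : ℝ := ∑ k ∈ nbh i, ω i k * ((n:ℝ)⁻¹ * ∑ t, V k t / W k t) with hC
    have hab : ∀ l, A l V = b l - C := by
      intro l
      rw [hA_apply]
      simp only [hb, hC, ← Finset.sum_sub_distrib, ← mul_sub]
    have hrepl : replicator (simMap nbh ω D ρ W i) b j
        = (numW j / den) * b j - (numW j / den) * ∑ l, (numW l / den) * b l := by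
      simp only [replicator, hq]
    have h1 : ∑ l, numW l * (A l V) = (∑ l, numW l * b l) - C * den := by
      simp only [hab, mul_sub, Finset.sum_sub_distrib]
      congr 1
      rw [hden_def, Finset.mul_sum]
      exact Finset.sum_congr rfl fun l _ => mul_comm _ _
    have h2 : ∑ l, (numW l / den) * b l = (∑ l, numW l * b l) / den := by
      rw [Finset.sum_div]
      exact Finset.sum_congr rfl fun l _ => div_mul_eq_mul_div _ _ _
    rw [hrepl, hab j, h1, h2]
    have hident : ∀ (a d S c x : ℝ), d ≠ 0 →
        a * (-(d ^ 2)⁻¹ * (S - c * d)) + d⁻¹ * (a * (x - c))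
          = a / d * x - a / d * (S / d) := by
      intro a d S c x hd
      field_simp
      ring
    exact hident _ _ _ _ _ hden0.ne'

theorem similarity_map_differential
    (m n : ℕ) (hn : 0 < n)
    (nbh : Fin m → Finset (Fin m)) (hself : ∀ i, i ∈ nbh i)
    (ω : Fin m → Fin m → ℝ)
    (hω : ∀ i, ∀ k ∈ nbh i, 0 < ω i k)
    (hωsum : ∀ i, ∑ k ∈ nbh i, ω i k = 1)
    (D : Fin m → Fin n → ℝ) (ρ : ℝ) (hρ : 0 < ρ)
    -- W in the assignment manifold
    (W : Fin m → Fin n → ℝ)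
    (hW : ∀ i j, 0 < W i j) (hWsum : ∀ i, ∑ j, W i j = 1) :
    -- S is differentiable at W
    DifferentiableAt ℝ (simMap nbh ω D ρ) W ∧
    -- componentwise formula for the differential on tangent matrices V ∈ T_W
    (∀ V : Fin m → Fin n → ℝ, (∀ k, ∑ j, V k j = 0) →
      ∀ i, fderiv ℝ (fun W' => simMap nbh ω D ρ W' i) W V
        = ∑ k ∈ nbh i, ω i k • replicator (simMap nbh ω D ρ W i) (fun j => V k j / W k j)) ∧
    -- equivalent global matrix form dS(W)[V] = R_{S(W)}[A_Ω (V / W)]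
    (∀ V : Fin m → Fin n → ℝ, (∀ k, ∑ j, V k j = 0) →
      fderiv ℝ (simMap nbh ω D ρ) W V
        = fun i => replicator (simMap nbh ω D ρ W i)
            (∑ k ∈ nbh i, ω i k • fun j => V k j / W k j)) := by
  classical
  have H : ∀ i j, ∃ L : (Fin m → Fin n → ℝ) →L[ℝ] ℝ,
      HasFDerivAt (fun W' => simMap nbh ω D ρ W' i j) L W ∧
      ∀ V : Fin m → Fin n → ℝ,
        L V = replicator (simMap nbh ω D ρ W i)
            (fun l => ∑ k ∈ nbh i, ω i k * (V k l / W k l)) j :=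
    fun i j => sim_core hn nbh ω D ρ W hW i j
  choose L hL hLval using H
  have hΦ : ∀ i, HasFDerivAt (fun W' => simMap nbh ω D ρ W' i)
      (ContinuousLinearMap.pi (L i)) W := fun i => hasFDerivAt_pi.2 (hL i)
  have hΨ : HasFDerivAt (simMap nbh ω D ρ)
      (ContinuousLinearMap.pi fun i => ContinuousLinearMap.pi (L i)) W :=
    hasFDerivAt_pi.2 hΦ
  have key : ∀ (V : Fin m → Fin n → ℝ) (i : Fin m),
      (fun j => L i j V) = ∑ k ∈ nbh i, ω i k • replicator (simMap nbh ω D ρ W i)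
        (fun j => V k j / W k j) := by
    intro V i
    have h1 : (fun j => L i j V) = replicator (simMap nbh ω D ρ W i)
        (fun l => ∑ k ∈ nbh i, ω i k * (V k l / W k l)) :=
      funext fun j => hLval i j V
    rw [h1]
    exact replicator_sum _ _ _ _
  refine ⟨hΨ.differentiableAt, ?_, ?_⟩
  · intro V _ i
    rw [(hΦ i).fderiv]
    exact key V i
  · intro V _
    rw [hΨ.fderiv]
    funext i
    have h2 : (ContinuousLinearMap.pi fun i => ContinuousLinearMap.pi (L i)) V i
        = fun j => L i j V := rfl
    have h3 : (∑ k ∈ nbh i, ω i k • fun j => V k j / W k j)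
        = fun l => ∑ k ∈ nbh i, ω i k * (V k l / W k l) := by
      funext l
      rw [Finset.sum_apply]
      exact Finset.sum_congr rfl fun k _ => rfl
    rw [h2, funext fun j => hLval i j V, h3]
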